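/- Let Ω ⊆ ℂ be a connected open set that is symmetric about the real axis (the image of Ω under complex conjugation equals Ω), and suppose Γ := Ω ∩ ℝ is nonempty. Set Ω⁺ = {z ∈ Ω : Im z > 0} and Ω⁻ = {z ∈ Ω : Im z < 0}. Let f : ℂ → ℂ be analytic (complex differentiable) on Ω⁺, continuous on Ω⁺ ∪ Γ, and real-valued on Γ. Then there exists a function F : ℂ → ℂ analytic on all of Ω such that F agrees with f on Ω⁺ ∪ Γ and F(conj z) = conj(F z) for every z ∈ Ω. -/
import Mathlib
open Set Complex intervalIntegral MeasureTheory

lemma gours {F : ℂ → ℂ} {a b c d : ℝ}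
    (hc : ContinuousOn F (Set.Ioo a b ×ℂ Set.Ioo c d))
    (hd : ∀ z ∈ Set.Ioo a b ×ℂ Set.Ioo c d, z.im ≠ 0 → DifferentiableAt ℂ F z)
    {x₁ x₂ y : ℝ} (hx₁ : x₁ ∈ Set.Ioo a b) (hx₂ : x₂ ∈ Set.Ioo a b) (hy : y ∈ Set.Ioo c d)
    (h0 : (0:ℝ) ∈ Set.Ioo c d) :
    (∫ t in x₁..x₂, F (t + (0:ℝ)*I)) - (∫ t in x₁..x₂, F (t + y*I))
      + I * (∫ s in (0:ℝ)..y, F (x₂ + s*I)) - I * (∫ s in (0:ℝ)..y, F (x₁ + s*I)) = 0 := by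
  have h := Complex.integral_boundary_rect_eq_zero_of_differentiable_on_off_countable F
    (x₁ : ℂ) ((x₂ : ℂ) + y*I) ∅ Set.countable_empty ?_ ?_
  · simpa [smul_eq_mul] using h
  · apply hc.mono
    intro z hz
    rw [Complex.mem_reProdIm] at hz ⊢
    simp only [Complex.ofReal_re, Complex.add_re, Complex.add_im, Complex.ofReal_im,
      Complex.mul_re, Complex.mul_im, Complex.I_re, Complex.I_im] at hz
    constructor
    · exact Set.ordConnected_Ioo.uIcc_subset hx₁ hx₂ (by simpa using hz.1)
    · exact Set.ordConnected_Ioo.uIcc_subset h0 hy (by simpa using hz.2)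
  · rintro z ⟨hz, -⟩
    rw [Complex.mem_reProdIm] at hz
    simp only [Complex.ofReal_re, Complex.add_re, Complex.add_im, Complex.ofReal_im,
      Complex.mul_re, Complex.mul_im, Complex.I_re, Complex.I_im] at hz
    have hz1 : z.re ∈ Set.Ioo (min x₁ x₂) (max x₁ x₂) := by simpa using hz.1
    have hz2 : z.im ∈ Set.Ioo (min 0 y) (max 0 y) := by simpa using hz.2
    have him : z.im ≠ 0 := by
      rintro h
      rw [h] at hz2
      have h1 := hz2.1; have h2 := hz2.2
      rcases min_lt_iff.mp h1 with h | h <;> rcases lt_max_iff.mp h2 with h' | h' <;> linarith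
    refine hd z ?_ him
    rw [Complex.mem_reProdIm]
    exact ⟨Set.ordConnected_Ioo.uIcc_subset hx₁ hx₂ (Set.Ioo_subset_Icc_self hz1),
      Set.ordConnected_Ioo.uIcc_subset h0 hy (Set.Ioo_subset_Icc_self hz2)⟩

lemma morera_rect {F : ℂ → ℂ} {a b c d x₀ : ℝ}
    (hc : ContinuousOn F (Set.Ioo a b ×ℂ Set.Ioo c d))
    (hd : ∀ z ∈ Set.Ioo a b ×ℂ Set.Ioo c d, z.im ≠ 0 → DifferentiableAt ℂ F z)
    (hx₀ : x₀ ∈ Set.Ioo a b) (h0 : (0:ℝ) ∈ Set.Ioo c d) :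
    ∀ z ∈ Set.Ioo a b ×ℂ Set.Ioo c d, DifferentiableAt ℂ F z := by
  set S := Set.Ioo a b ×ℂ Set.Ioo c d with hS
  have hs : IsOpen S := IsOpen.reProdIm isOpen_Ioo isOpen_Ioo
  have hIv : ∀ x ∈ Set.Ioo a b, ∀ y₁ ∈ Set.Ioo c d, ∀ y₂ ∈ Set.Ioo c d,
      IntervalIntegrable (fun s' : ℝ => F (x + s'*I)) MeasureTheory.volume y₁ y₂ := by
    intro x hx y₁ hy₁ y₂ hy₂
    apply ContinuousOn.intervalIntegrable
    apply hc.comp (Continuous.continuousOn (by continuity))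
    intro t ht
    rw [Complex.mem_reProdIm]
    exact ⟨by simpa using hx, by simpa using Set.ordConnected_Ioo.uIcc_subset hy₁ hy₂ ht⟩
  have hIh : ∀ y ∈ Set.Ioo c d, ∀ x₁ ∈ Set.Ioo a b, ∀ x₂ ∈ Set.Ioo a b,
      IntervalIntegrable (fun t : ℝ => F (t + y*I)) MeasureTheory.volume x₁ x₂ := by
    intro y hy x₁ hx₁ x₂ hx₂
    apply ContinuousOn.intervalIntegrable
    apply hc.comp (Continuous.continuousOn (by continuity))
    intro t ht
    rw [Complex.mem_reProdIm]
    exact ⟨by simpa using Set.ordConnected_Ioo.uIcc_subset hx₁ hx₂ ht, by simpa using hy⟩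
  set A : ℂ → ℂ := fun w =>
    (∫ t in x₀..w.re, F (t + (0:ℝ)*I)) + I * ∫ s' in (0:ℝ)..w.im, F (w.re + s'*I) with hA
  have key : ∀ w ∈ S, HasDerivAt A (F w) w := by
    intro w hw
    rw [Complex.mem_reProdIm] at hw
    rw [hasDerivAt_iff_isLittleO, Asymptotics.isLittleO_iff]
    intro ε hε
    have hcw : ContinuousAt F w := hc.continuousAt (hs.mem_nhds (Complex.mem_reProdIm.mpr hw))
    rw [Metric.continuousAt_iff] at hcw
    obtain ⟨δ, hδpos, hδ⟩ := hcw (ε/2) (by linarith)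
    obtain ⟨r₁, hr₁pos, hball⟩ := Metric.isOpen_iff.mp hs w (Complex.mem_reProdIm.mpr hw)
    have hrpos : (0:ℝ) < min (r₁/2) (δ/2) := lt_min (by linarith) (by linarith)
    filter_upwards [Metric.ball_mem_nhds w hrpos] with v hv
    have hvw : ‖v - w‖ < min (r₁/2) (δ/2) := by simpa [dist_eq_norm] using hv
    have hvw1 : ‖v - w‖ ≤ r₁/2 := le_of_lt (hvw.trans_le (min_le_left _ _))
    have hvw2 : ‖v - w‖ < δ/2 := hvw.trans_le (min_le_right _ _)
    have hvS : v ∈ S := hball (by rw [Metric.mem_ball, dist_eq_norm]; linarith)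
    rw [Complex.mem_reProdIm] at hvS
    have hxx' : |v.re - w.re| ≤ ‖v - w‖ := by simpa using Complex.abs_re_le_norm (v - w)
    have hyy' : |v.im - w.im| ≤ ‖v - w‖ := by simpa using Complex.abs_im_le_norm (v - w)
    have e1 : (∫ t in x₀..w.re, F (t + (0:ℝ)*I)) + (∫ t in w.re..v.re, F (t + (0:ℝ)*I))
        = ∫ t in x₀..v.re, F (t + (0:ℝ)*I) :=
      intervalIntegral.integral_add_adjacent_intervals (hIh 0 h0 x₀ hx₀ w.re hw.1)
        (hIh 0 h0 w.re hw.1 v.re hvS.1)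
    have e2 : (∫ s' in (0:ℝ)..w.im, F (v.re + s'*I)) + (∫ s' in w.im..v.im, F (v.re + s'*I))
        = ∫ s' in (0:ℝ)..v.im, F (v.re + s'*I) :=
      intervalIntegral.integral_add_adjacent_intervals (hIv v.re hvS.1 0 h0 w.im hw.2)
        (hIv v.re hvS.1 w.im hw.2 v.im hvS.2)
    have e3 := gours hc hd hw.1 hvS.1 hw.2 h0
    have keyeq : A v - A w = (∫ t in w.re..v.re, F (t + w.im*I))
        + I * ∫ s' in w.im..v.im, F (v.re + s'*I) := by
      simp only [hA]
      linear_combination -e1 - I * e2 + e3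
    have hvweq : (v - w) = ((v.re - w.re : ℝ) : ℂ) + ((v.im - w.im : ℝ) : ℂ) * I := by
      apply Complex.ext <;> simp
    have main : A v - A w - (v - w) • F w
        = (∫ t in w.re..v.re, (F (t + w.im*I) - F w))
          + I * ∫ s' in w.im..v.im, (F (v.re + s'*I) - F w) := by
      rw [intervalIntegral.integral_sub (hIh w.im hw.2 w.re hw.1 v.re hvS.1)
          intervalIntegrable_const,
        intervalIntegral.integral_sub (hIv v.re hvS.1 w.im hw.2 v.im hvS.2)
          intervalIntegrable_const,
        keyeq, intervalIntegral.integral_const, intervalIntegral.integral_const,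
        smul_eq_mul, Complex.real_smul, Complex.real_smul, hvweq]
      ring
    rw [main]
    have b1 : ‖∫ t in w.re..v.re, (F (t + w.im*I) - F w)‖ ≤ (ε/2) * |v.re - w.re| := by
      apply intervalIntegral.norm_integral_le_of_norm_le_const
      intro t ht
      rw [Set.mem_uIoc] at ht
      have ht' : |t - w.re| ≤ |v.re - w.re| := by
        rcases ht with ⟨h1, h2⟩ | ⟨h1, h2⟩
        · rw [_root_.abs_of_nonneg (by linarith)]
          have := le_abs_self (v.re - w.re); linarith
        · rw [_root_.abs_of_nonpos (by linarith)]
          have := neg_abs_le (v.re - w.re); linarith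
      have hd : dist (↑t + ↑w.im*I) w < δ := by
        rw [dist_eq_norm]
        have he : (↑t + ↑w.im*I - w) = ((t - w.re : ℝ) : ℂ) := by
          apply Complex.ext <;> simp
        rw [he, Complex.norm_real, Real.norm_eq_abs]
        calc |t - w.re| ≤ |v.re - w.re| := ht'
        _ ≤ ‖v - w‖ := hxx'
        _ < δ/2 := hvw2
        _ < δ := by linarith
      exact le_of_lt (by simpa [dist_eq_norm] using hδ hd)
    have b2 : ‖∫ s' in w.im..v.im, (F (v.re + s'*I) - F w)‖ ≤ (ε/2) * |v.im - w.im| := by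
      apply intervalIntegral.norm_integral_le_of_norm_le_const
      intro t ht
      rw [Set.mem_uIoc] at ht
      have ht' : |t - w.im| ≤ |v.im - w.im| := by
        rcases ht with ⟨h1, h2⟩ | ⟨h1, h2⟩
        · rw [_root_.abs_of_nonneg (by linarith)]
          have := le_abs_self (v.im - w.im); linarith
        · rw [_root_.abs_of_nonpos (by linarith)]
          have := neg_abs_le (v.im - w.im); linarith
      have hd : dist (↑v.re + ↑t*I) w < δ := by
        rw [dist_eq_norm]
        calc ‖↑v.re + ↑t*I - w‖ ≤ |(↑v.re + ↑t*I - w).re| + |(↑v.re + ↑t*I - w).im| :=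
              Complex.norm_le_abs_re_add_abs_im _
        _ = |v.re - w.re| + |t - w.im| := by simp
        _ ≤ ‖v - w‖ + ‖v - w‖ := add_le_add hxx' (ht'.trans hyy')
        _ < δ := by linarith
      exact le_of_lt (by simpa [dist_eq_norm] using hδ hd)
    calc ‖(∫ t in w.re..v.re, (F (t + w.im*I) - F w))
          + I * ∫ s' in w.im..v.im, (F (v.re + s'*I) - F w)‖
        ≤ ‖∫ t in w.re..v.re, (F (t + w.im*I) - F w)‖
            + ‖I * ∫ s' in w.im..v.im, (F (v.re + s'*I) - F w)‖ := norm_add_le _ _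
      _ = ‖∫ t in w.re..v.re, (F (t + w.im*I) - F w)‖
            + ‖∫ s' in w.im..v.im, (F (v.re + s'*I) - F w)‖ := by
          rw [norm_mul, Complex.norm_I, one_mul]
      _ ≤ (ε/2) * |v.re - w.re| + (ε/2) * |v.im - w.im| := add_le_add b1 b2
      _ ≤ (ε/2) * ‖v - w‖ + (ε/2) * ‖v - w‖ := by gcongr
      _ = ε * ‖v - w‖ := by ring
  have hAd : DifferentiableOn ℂ A S := fun w hw =>
    ((key w hw).differentiableAt).differentiableWithinAt
  have hAa : AnalyticOnNhd ℂ A S := hAd.analyticOnNhd hs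
  have hda : AnalyticOnNhd ℂ (deriv A) S := hAa.deriv
  intro z hz
  have heq : deriv A =ᶠ[nhds z] F := by
    filter_upwards [hs.mem_nhds hz] with w hw
    exact (key w hw).deriv
  exact ((hda z hz).differentiableAt).congr_of_eventuallyEq heq.symm

lemma conj_diff {f : ℂ → ℂ} {z : ℂ} (hf : DifferentiableAt ℂ f ((starRingEnd ℂ) z)) :
    DifferentiableAt ℂ (fun w => (starRingEnd ℂ) (f ((starRingEnd ℂ) w))) z := by
  set u := (starRingEnd ℂ) z with hu
  have h := hf.hasDerivAt
  rw [hasDerivAt_iff_isLittleO] at h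
  have hconj : Filter.Tendsto (fun w : ℂ => (starRingEnd ℂ) w) (nhds z) (nhds u) :=
    (Complex.continuous_conj.tendsto z)
  have h2 := h.comp_tendsto hconj
  have hder : HasDerivAt (fun w => (starRingEnd ℂ) (f ((starRingEnd ℂ) w)))
      ((starRingEnd ℂ) (deriv f u)) z := by
    rw [hasDerivAt_iff_isLittleO, Asymptotics.isLittleO_iff]
    intro ε hε
    filter_upwards [Asymptotics.isLittleO_iff.mp h2 hε] with w hw
    have e : (starRingEnd ℂ) (f ((starRingEnd ℂ) w)) - (starRingEnd ℂ) (f ((starRingEnd ℂ) z))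
        - (w - z) • (starRingEnd ℂ) (deriv f u)
        = (starRingEnd ℂ) (f ((starRingEnd ℂ) w) - f u - ((starRingEnd ℂ) w - u) • (deriv f u)) := by
      simp only [map_sub, map_mul, smul_eq_mul, hu, Complex.conj_conj]
    rw [e, RCLike.norm_conj]
    have e2 : ‖(starRingEnd ℂ) w - u‖ = ‖w - z‖ := by
      rw [hu, ← map_sub, RCLike.norm_conj]
    simp only [Function.comp_apply] at hw
    rw [e2] at hw
    exact hw
  exact hder.differentiableAt

/-- Schwarz reflection principle (Theorem 1). -/
theorem schwarz_reflection_principle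
    (Ω : Set ℂ) (hΩopen : IsOpen Ω) (hΩconn : IsConnected Ω)
    (hΩsym : (starRingEnd ℂ) '' Ω = Ω)
    (Γ : Set ℂ) (hΓ : Γ = Ω ∩ {z : ℂ | z.im = 0}) (hΓne : Γ.Nonempty)
    (Ωp : Set ℂ) (hΩp : Ωp = {z ∈ Ω | 0 < z.im})
    (f : ℂ → ℂ)
    (hf : ∀ z ∈ Ωp, DifferentiableAt ℂ f z)
    (hfc : ContinuousOn f (Ωp ∪ Γ))
    (hreal : ∀ z ∈ Γ, (f z).im = 0) :
    ∃ F : ℂ → ℂ,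
      (∀ z ∈ Ω, DifferentiableAt ℂ F z) ∧
      (∀ z ∈ Ωp ∪ Γ, F z = f z) ∧
      (∀ z ∈ Ω, F (starRingEnd ℂ z) = starRingEnd ℂ (F z)) := by
  have memconj : ∀ z ∈ Ω, (starRingEnd ℂ) z ∈ Ω := fun z hz => by
    rw [← hΩsym]; exact ⟨z, hz, rfl⟩
  set F : ℂ → ℂ := fun z =>
    if 0 ≤ z.im then f z else (starRingEnd ℂ) (f ((starRingEnd ℂ) z)) with hF
  have hFf : ∀ z ∈ Ωp ∪ Γ, F z = f z := by
    rintro z (hz | hz)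
    · rw [hΩp] at hz; exact if_pos (le_of_lt hz.2)
    · rw [hΓ] at hz; exact if_pos (le_of_eq hz.2.symm)
  -- real values on Γ
  have hrealΓ : ∀ z ∈ Ω, z.im = 0 → (starRingEnd ℂ) (f z) = f z := by
    intro z hz him
    rw [Complex.conj_eq_iff_im]
    exact hreal z (by rw [hΓ]; exact ⟨hz, him⟩)
  -- symmetry of F
  have hsym : ∀ z ∈ Ω, F ((starRingEnd ℂ) z) = (starRingEnd ℂ) (F z) := by
    intro z hz
    rcases lt_trichotomy z.im 0 with him | him | him
    · have h1 : F ((starRingEnd ℂ) z) = f ((starRingEnd ℂ) z) :=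
        if_pos (by rw [Complex.conj_im]; linarith)
      have h2 : F z = (starRingEnd ℂ) (f ((starRingEnd ℂ) z)) := if_neg (by linarith)
      rw [h1, h2, Complex.conj_conj]
    · have hcz : (starRingEnd ℂ) z = z := Complex.conj_eq_iff_im.mpr him
      have h2 : F z = f z := if_pos (le_of_eq him.symm)
      rw [hcz, h2, hrealΓ z hz him]
    · have h1 : F ((starRingEnd ℂ) z) = (starRingEnd ℂ) (f ((starRingEnd ℂ) ((starRingEnd ℂ) z))) :=
        if_neg (by rw [Complex.conj_im]; linarith)
      have h2 : F z = f z := if_pos (le_of_lt him)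
      rw [h1, h2, Complex.conj_conj]
  -- differentiability off the real axis
  have hFd_off : ∀ z ∈ Ω, z.im ≠ 0 → DifferentiableAt ℂ F z := by
    intro z hz him
    rcases him.lt_or_gt with him | him
    · -- lower half: F = conj ∘ f ∘ conj near z
      have hczΩp : (starRingEnd ℂ) z ∈ Ωp := by
        rw [hΩp]; exact ⟨memconj z hz, by rw [Complex.conj_im]; linarith⟩
      have hg : DifferentiableAt ℂ (fun w => (starRingEnd ℂ) (f ((starRingEnd ℂ) w))) z :=
        conj_diff (hf _ hczΩp)
      apply hg.congr_of_eventuallyEq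
      filter_upwards [(isOpen_lt Complex.continuous_im continuous_const).mem_nhds
        (show z.im < 0 from him)] with w hw
      exact if_neg (not_le.mpr hw)
    · have hzΩp : z ∈ Ωp := by rw [hΩp]; exact ⟨hz, him⟩
      apply (hf z hzΩp).congr_of_eventuallyEq
      filter_upwards [(isOpen_lt continuous_const Complex.continuous_im).mem_nhds
        (show (0:ℝ) < z.im from him)] with w hw
      exact if_pos (le_of_lt hw)
  -- continuity of F on Ω
  have hFc : ContinuousOn F Ω := by
    intro z hz
    rcases eq_or_ne z.im 0 with him | him
    · -- on the real axis
      have hzΓ : z ∈ Γ := by rw [hΓ]; exact ⟨hz, him⟩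
      have hFz : F z = f z := if_pos (le_of_eq him.symm)
      have hsplit : Ω = (Ω ∩ {w : ℂ | 0 ≤ w.im}) ∪ (Ω ∩ {w : ℂ | w.im < 0}) := by
        ext w; constructor
        · intro hw; rcases le_or_gt 0 w.im with h | h
          · exact Or.inl ⟨hw, h⟩
          · exact Or.inr ⟨hw, h⟩
        · rintro (⟨hw, -⟩ | ⟨hw, -⟩) <;> exact hw
      have hsubA : Ω ∩ {w : ℂ | 0 ≤ w.im} ⊆ Ωp ∪ Γ := by
        rintro w ⟨hw, hw2⟩
        rcases eq_or_lt_of_le (show (0:ℝ) ≤ w.im from hw2) with h | h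
        · exact Or.inr (by rw [hΓ]; exact ⟨hw, h.symm⟩)
        · exact Or.inl (by rw [hΩp]; exact ⟨hw, h⟩)
      have htf : Filter.Tendsto f (nhdsWithin z (Ωp ∪ Γ)) (nhds (f z)) :=
        hfc z (Or.inr hzΓ)
      have hA : Filter.Tendsto F (nhdsWithin z (Ω ∩ {w : ℂ | 0 ≤ w.im})) (nhds (f z)) := by
        apply tendsto_nhdsWithin_congr (f := f)
        · rintro w hw
          exact (hFf w (hsubA hw)).symm
        · exact htf.mono_left (nhdsWithin_mono z hsubA)
      have hB : Filter.Tendsto F (nhdsWithin z (Ω ∩ {w : ℂ | w.im < 0})) (nhds (f z)) := by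
        have hmaps : Set.MapsTo (starRingEnd ℂ) (Ω ∩ {w : ℂ | w.im < 0}) (Ωp ∪ Γ) := by
          rintro w ⟨hw, hw2⟩
          have hw2' : w.im < 0 := hw2
          exact Or.inl (by rw [hΩp]; exact ⟨memconj w hw, by rw [Complex.conj_im]; linarith⟩)
        have h1 : Filter.Tendsto (starRingEnd ℂ) (nhdsWithin z (Ω ∩ {w : ℂ | w.im < 0}))
            (nhdsWithin ((starRingEnd ℂ) z) (Ωp ∪ Γ)) :=
          (Complex.continuous_conj.continuousWithinAt).tendsto_nhdsWithin hmaps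
        have hcz : (starRingEnd ℂ) z = z := Complex.conj_eq_iff_im.mpr him
        rw [hcz] at h1
        have h2 : Filter.Tendsto (fun w => f ((starRingEnd ℂ) w))
            (nhdsWithin z (Ω ∩ {w : ℂ | w.im < 0})) (nhds (f z)) := htf.comp h1
        have h3 : Filter.Tendsto (fun w => (starRingEnd ℂ) (f ((starRingEnd ℂ) w)))
            (nhdsWithin z (Ω ∩ {w : ℂ | w.im < 0})) (nhds ((starRingEnd ℂ) (f z))) :=
          (Complex.continuous_conj.tendsto (f z)).comp h2
        rw [hrealΓ z hz him] at h3
        apply tendsto_nhdsWithin_congr (f := fun w => (starRingEnd ℂ) (f ((starRingEnd ℂ) w)))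
        · rintro w ⟨-, hw2⟩
          exact (if_neg (not_le.mpr hw2)).symm
        · exact h3
      have : Filter.Tendsto F (nhdsWithin z Ω) (nhds (f z)) := by
        rw [hsplit, nhdsWithin_union]
        rw [Filter.tendsto_sup]
        exact ⟨hA, hB⟩
      rw [ContinuousWithinAt, hFz]
      exact this
    · exact (hFd_off z hz him).continuousAt.continuousWithinAt
  -- differentiability everywhere on Ω
  have hFd : ∀ z ∈ Ω, DifferentiableAt ℂ F z := by
    intro z hz
    rcases eq_or_ne z.im 0 with him | him
    · obtain ⟨r, hrpos, hball⟩ := Metric.isOpen_iff.mp hΩopen z hz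
      have hsub : Set.Ioo (z.re - r/2) (z.re + r/2) ×ℂ Set.Ioo (-(r/2)) (r/2) ⊆ Ω := by
        intro w hw
        rw [Complex.mem_reProdIm] at hw
        apply hball
        rw [Metric.mem_ball, dist_eq_norm]
        calc ‖w - z‖ ≤ |(w - z).re| + |(w - z).im| := Complex.norm_le_abs_re_add_abs_im _
          _ = |w.re - z.re| + |w.im| := by rw [Complex.sub_re, Complex.sub_im, him, sub_zero]
          _ < r/2 + r/2 := by
              apply add_lt_add
              · rw [abs_lt]; constructor <;> [linarith [hw.1.1]; linarith [hw.1.2]]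
              · rw [abs_lt]; exact ⟨hw.2.1, hw.2.2⟩
          _ = r := by ring
      have hzS : z ∈ Set.Ioo (z.re - r/2) (z.re + r/2) ×ℂ Set.Ioo (-(r/2)) (r/2) := by
        rw [Complex.mem_reProdIm, him]
        constructor <;> constructor <;> linarith
      exact morera_rect (x₀ := z.re) (hFc.mono hsub)
        (fun w hw hwim => hFd_off w (hsub hw) hwim)
        (Set.mem_Ioo.mpr ⟨by linarith, by linarith⟩)
        (Set.mem_Ioo.mpr ⟨by linarith, by linarith⟩) z hzS
    · exact hFd_off z hz him
  exact ⟨F, hFd, hFf, hsym⟩
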